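/- Every finite simple undirected graph on n ≥ 2 vertices with minimum degree at least 3 contains a cycle of length at most 2·log₂ n. -/

import Mathlib

open SimpleGraph Walk

section Aux

variable {V : Type*} [DecidableEq V] {G : SimpleGraph V}

/-- If a path from `u` to `v` contains the edge `s(u,v)`, it has length 1. -/
lemma aux_length_eq_one_of_edge {u v : V} {p : G.Walk u v}
    (hp : p.IsPath) (he : s(u, v) ∈ p.edges) : p.length = 1 := by
  cases p with
  | nil => simp at he
  | @cons _ b _ h q =>
    rw [Walk.edges_cons, List.mem_cons] at he
    rcases he with he | he
    · have hb : v = b := (Sym2.congr_right.mp he)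
      subst hb
      have hq : q.IsPath := (Walk.cons_isPath_iff _ _).mp hp |>.1
      rw [Walk.isPath_iff_eq_nil] at hq
      subst hq
      simp
    · exfalso
      exact ((Walk.cons_isPath_iff _ _).mp hp).2 (Walk.fst_mem_support_of_mem_edges q he)

/-- Two walks of length one between the same endpoints are equal. -/
lemma aux_walk_length_one_eq {u v : V} (p q : G.Walk u v)
    (hp : p.length = 1) (hq : q.length = 1) : p = q := by
  cases p with
  | nil => simp at hp
  | cons h p' =>
    cases p' with
    | nil =>
      cases q with
      | nil => simp at hq
      | cons h' q' =>
        cases q' with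
        | nil => rfl
        | cons h'' q'' => simp at hq
    | cons h'' p'' => simp at hp

/-- Two distinct internally disjoint paths between the same endpoints form a cycle. -/
lemma aux_cycle_of_disjoint_paths {u v : V} {p q : G.Walk u v}
    (hp : p.IsPath) (hq : q.IsPath) (hne : p ≠ q)
    (hint : ∀ x, x ∈ p.support → x ∈ q.support → x = u ∨ x = v) :
    (p.append q.reverse).IsCycle := by
  have huv : u ≠ v := by
    rintro rfl
    rw [Walk.isPath_iff_eq_nil] at hp hq
    exact hne (hp.trans hq.symm)
  have hedge : ∀ e ∈ p.edges, e ∉ q.edges := by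
    intro e hep heq
    induction e using Sym2.ind with
    | _ a b =>
      have hab : G.Adj a b := p.adj_of_mem_edges hep
      have ha : a = u ∨ a = v :=
        hint a (Walk.fst_mem_support_of_mem_edges p hep)
          (Walk.fst_mem_support_of_mem_edges q heq)
      have hb : b = u ∨ b = v :=
        hint b (Walk.snd_mem_support_of_mem_edges p hep)
          (Walk.snd_mem_support_of_mem_edges q heq)
      have heuv : s(a, b) = s(u, v) := by
        rcases ha with rfl | rfl <;> rcases hb with rfl | rfl
        · exact absurd rfl hab.ne
        · rfl
        · exact Sym2.eq_swap
        · exact absurd rfl hab.ne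
      rw [heuv] at hep heq
      have hp1 := aux_length_eq_one_of_edge hp hep
      have hq1 := aux_length_eq_one_of_edge hq heq
      exact hne (aux_walk_length_one_eq p q hp1 hq1)
  rw [Walk.isCycle_def]
  refine ⟨?_, ?_, ?_⟩
  · rw [Walk.isTrail_def, Walk.edges_append, Walk.edges_reverse]
    refine List.Nodup.append hp.isTrail.edges_nodup
      (List.nodup_reverse.mpr hq.isTrail.edges_nodup) ?_
    intro e he1 he2
    exact hedge e he1 (List.mem_reverse.mp he2)
  · intro hn
    have h0 := congrArg Walk.length hn
    rw [Walk.length_append, Walk.length_reverse] at h0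
    simp only [Walk.length_nil] at h0
    exact huv (Walk.eq_of_length_eq_zero (by omega : p.length = 0))
  · rw [Walk.tail_support_append]
    have hnp : p.support.tail.Nodup ∧ u ∉ p.support.tail := by
      have h := hp.support_nodup
      rw [Walk.support_eq_cons, List.nodup_cons] at h
      exact ⟨h.2, h.1⟩
    have hnq : q.reverse.support.tail.Nodup ∧ v ∉ q.reverse.support.tail := by
      have h := hq.reverse.support_nodup
      rw [Walk.support_eq_cons, List.nodup_cons] at h
      exact ⟨h.2, h.1⟩
    refine List.Nodup.append hnp.1 hnq.1 ?_
    intro x hx1 hx2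
    have hxp : x ∈ p.support := List.mem_of_mem_tail hx1
    have hxq : x ∈ q.support := by
      have := List.mem_of_mem_tail hx2
      rwa [Walk.support_reverse, List.mem_reverse] at this
    rcases hint x hxp hxq with rfl | rfl
    · exact hnp.2 hx1
    · exact hnq.2 hx2

/-- Two distinct paths between the same endpoints yield a cycle of length at most the
sum of their lengths. -/
lemma aux_two_paths {G : SimpleGraph V} : ∀ n : ℕ, ∀ {u v : V} (p q : G.Walk u v),
    p.IsPath → q.IsPath → p ≠ q → p.length + q.length ≤ n →
    ∃ (x : V) (c : G.Walk x x), c.IsCycle ∧ c.length ≤ n := by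
  intro n
  induction n using Nat.strong_induction_on with
  | _ n ih =>
    intro u v p q hp hq hne hlen
    by_cases hshare : ∃ x, x ∈ p.support ∧ x ∈ q.support ∧ x ≠ u ∧ x ≠ v
    · obtain ⟨x, hxp, hxq, hxu, hxv⟩ := hshare
      have hps := Walk.take_spec p hxp
      have hqs := Walk.take_spec q hxq
      set p1 := p.takeUntil x hxp with hp1d
      set p2 := p.dropUntil x hxp with hp2d
      set q1 := q.takeUntil x hxq with hq1d
      set q2 := q.dropUntil x hxq with hq2d
      have hlp : p1.length + p2.length = p.length := by rw [← Walk.length_append, hps]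
      have hlq : q1.length + q2.length = q.length := by rw [← Walk.length_append, hqs]
      have hp1pos : 1 ≤ p1.length :=
        Nat.one_le_iff_ne_zero.mpr (fun h0 => hxu (Walk.eq_of_length_eq_zero h0).symm)
      have hq1pos : 1 ≤ q1.length :=
        Nat.one_le_iff_ne_zero.mpr (fun h0 => hxu (Walk.eq_of_length_eq_zero h0).symm)
      have hp2pos : 1 ≤ p2.length :=
        Nat.one_le_iff_ne_zero.mpr (fun h0 => hxv (Walk.eq_of_length_eq_zero h0))
      have hq2pos : 1 ≤ q2.length :=
        Nat.one_le_iff_ne_zero.mpr (fun h0 => hxv (Walk.eq_of_length_eq_zero h0))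
      by_cases h1 : p1 = q1
      · have h2 : p2 ≠ q2 := fun h => hne (by rw [← hps, ← hqs, h1, h])
        obtain ⟨y, c, hc, hcl⟩ := ih (p2.length + q2.length) (by omega) p2 q2
          (hp.dropUntil hxp) (hq.dropUntil hxq) h2 le_rfl
        exact ⟨y, c, hc, by omega⟩
      · obtain ⟨y, c, hc, hcl⟩ := ih (p1.length + q1.length) (by omega) p1 q1
          (hp.takeUntil hxp) (hq.takeUntil hxq) h1 le_rfl
        exact ⟨y, c, hc, by omega⟩
    · have hint : ∀ x, x ∈ p.support → x ∈ q.support → x = u ∨ x = v := by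
        intro x hx1 hx2
        by_contra hc
        push_neg at hc
        exact hshare ⟨x, hx1, hx2, hc.1, hc.2⟩
      refine ⟨u, p.append q.reverse, aux_cycle_of_disjoint_paths hp hq hne hint, ?_⟩
      rw [Walk.length_append, Walk.length_reverse]
      exact hlen

/-- Concatenating an edge to a new vertex onto a path gives a path. -/
lemma aux_isPath_concat {u v w : V} {p : G.Walk u v} (hp : p.IsPath)
    (h : G.Adj v w) (hw : w ∉ p.support) : (p.concat h).IsPath := by
  have h1 : (p.concat h).reverse.IsPath := by
    rw [Walk.reverse_concat, Walk.cons_isPath_iff]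
    exact ⟨hp.reverse, by rwa [Walk.support_reverse, List.mem_reverse]⟩
  simpa [Walk.concat_eq_append] using h1.reverse

end Aux

/-- Every finite simple undirected graph on `n ≥ 2` vertices with minimum degree
at least 3 contains a cycle of length at most `2 · log₂ n`. -/
theorem min_degree_three_short_cycle {V : Type*} [Fintype V] [DecidableEq V]
    (G : SimpleGraph V) [DecidableRel G.Adj]
    (hn : 2 ≤ Fintype.card V)
    (hdeg : ∀ v : V, 3 ≤ G.degree v) :
    ∃ (v : V) (w : G.Walk v v), w.IsCycle ∧
      (w.length : ℝ) ≤ 2 * Real.logb 2 (Fintype.card V) := by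
  classical
  set n := Fintype.card V with hndef
  obtain ⟨v₀⟩ : Nonempty V := Fintype.card_pos_iff.mp (by omega)
  have hn4 : 4 ≤ n := by
    have h1 := G.degree_lt_card_verts v₀
    have h2 := hdeg v₀
    omega
  set k := Nat.log 2 n with hkdef
  have hk2 : 2 ≤ k := by
    have h4 : 2 ^ 2 ≤ n := by omega
    exact (Nat.le_log_iff_pow_le (by norm_num) (by omega)).mpr h4
  have hpow1 : 2 ^ k ≤ n := Nat.pow_log_le_self 2 (by omega)
  have hpow2 : n < 2 ^ (k + 1) := Nat.lt_pow_succ_log_self (by norm_num) n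
  suffices h : ∃ (x : V) (c : G.Walk x x), c.IsCycle ∧ c.length ≤ 2 * k by
    obtain ⟨x, c, hc, hcl⟩ := h
    refine ⟨x, c, hc, ?_⟩
    have h1 : (c.length : ℝ) ≤ 2 * (k : ℝ) := by exact_mod_cast hcl
    have h2 : (k : ℝ) ≤ Real.logb 2 n := by
      rw [Real.le_logb_iff_rpow_le (by norm_num) (by positivity)]
      rw [Real.rpow_natCast]
      exact_mod_cast hpow1
    calc (c.length : ℝ) ≤ 2 * (k : ℝ) := h1
      _ ≤ 2 * Real.logb 2 n := by linarith
  by_contra hno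
  push_neg at hno
  -- uniqueness of short paths from v₀
  have huniq : ∀ {w : V} (p q : G.Walk v₀ w), p.IsPath → q.IsPath →
      p.length ≤ k → q.length ≤ k → p = q := by
    intro w p q hp hq hpl hql
    by_contra hne
    obtain ⟨x, c, hc, hcl⟩ := aux_two_paths (2 * k) p q hp hq hne (by omega)
    exact absurd hcl (not_le.mpr (hno x c hc))
  set P : ℕ → Finset V :=
    fun i => Finset.univ.filter (fun w => ∃ p : G.Walk v₀ w, p.IsPath ∧ p.length = i)
    with hPdef
  have hmem : ∀ i w, w ∈ P i ↔ ∃ p : G.Walk v₀ w, p.IsPath ∧ p.length = i := by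
    intro i w
    simp [hPdef]
  -- key: each vertex in level i has two extensions to level i+1
  have hkey : ∀ i, i + 1 ≤ k → ∀ w ∈ P i, ∃ s : Finset V, s.card = 2 ∧ s ⊆ P (i + 1) ∧
      ∀ x ∈ s, ∃ p : G.Walk v₀ x, p.IsPath ∧ p.length = i + 1 ∧ p.getVert i = w := by
    intro i hik w hw
    rw [hmem] at hw
    obtain ⟨p, hp, hpl⟩ := hw
    have hbad : ∀ x, G.Adj w x → x ∈ p.support → x = p.getVert (i - 1) := by
      intro x hxadj hxsup
      set d := p.dropUntil x hxsup with hdd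
      set t := p.takeUntil x hxsup with htd
      have hds : t.append d = p := Walk.take_spec p hxsup
      have hdp : d.IsPath := hp.dropUntil hxsup
      have hlen : t.length + d.length = p.length := by rw [← Walk.length_append, hds]
      by_cases hedge : s(w, x) ∈ d.edges
      · have hd1 : d.length = 1 :=
          aux_length_eq_one_of_edge hdp (by rwa [Sym2.eq_swap] at hedge)
        rw [← hds, Walk.getVert_append, if_neg (by omega)]
        have h0 : i - 1 - t.length = 0 := by omega
        rw [h0, Walk.getVert_zero]
      · exfalso
        have hc := SimpleGraph.Path.cons_isCycle ⟨d, hdp⟩ hxadj hedge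
        have hlt : 2 * k < d.length + 1 := by simpa using hno w _ hc
        have hdle : d.length ≤ p.length := Walk.length_dropUntil_le p hxsup
        omega
    have hint : (G.neighborFinset w ∩ p.support.toFinset) ⊆ {p.getVert (i - 1)} := by
      intro x hx
      rw [Finset.mem_inter] at hx
      rw [Finset.mem_singleton]
      exact hbad x ((SimpleGraph.mem_neighborFinset _ _ _).mp hx.1)
        (List.mem_toFinset.mp hx.2)
    have hcard2 : 2 ≤ (G.neighborFinset w \ p.support.toFinset).card := by
      have h1 := Finset.card_sdiff_add_card_inter (G.neighborFinset w) p.support.toFinset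
      have h2 : (G.neighborFinset w ∩ p.support.toFinset).card ≤ 1 :=
        le_trans (Finset.card_le_card hint) (by simp)
      have h3 := hdeg w
      rw [← SimpleGraph.card_neighborFinset_eq_degree] at h3
      omega
    have hext : ∀ x, x ∈ G.neighborFinset w \ p.support.toFinset →
        ∃ q : G.Walk v₀ x, q.IsPath ∧ q.length = i + 1 ∧ q.getVert i = w := by
      intro x hx
      rw [Finset.mem_sdiff, SimpleGraph.mem_neighborFinset] at hx
      obtain ⟨hadj, hnsup⟩ := hx
      have hnsup' : x ∉ p.support := fun h => hnsup (List.mem_toFinset.mpr h)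
      refine ⟨p.concat hadj, aux_isPath_concat hp hadj hnsup', ?_, ?_⟩
      · rw [Walk.length_concat, hpl]
      · rw [Walk.concat_eq_append, Walk.getVert_append, if_neg (by omega)]
        rw [hpl, Nat.sub_self, Walk.getVert_zero]
    obtain ⟨a, ha, b, hb, hab⟩ := Finset.one_lt_card.mp (by omega : 1 < (G.neighborFinset w \ p.support.toFinset).card)
    have hmemab : ∀ x ∈ ({a, b} : Finset V),
        x ∈ G.neighborFinset w \ p.support.toFinset := by
      intro x hx
      rcases Finset.mem_insert.mp hx with rfl | hx'
      · exact ha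
      · rw [Finset.mem_singleton] at hx'
        subst hx'
        exact hb
    refine ⟨{a, b}, ?_, ?_, ?_⟩
    · exact Finset.card_pair hab
    · intro x hx
      obtain ⟨q, h1, h2, _⟩ := hext x (hmemab x hx)
      rw [hmem]
      exact ⟨q, h1, h2⟩
    · intro x hx
      exact hext x (hmemab x hx)
  -- doubling of level sizes
  have hdouble : ∀ i, i + 1 ≤ k → 2 * (P i).card ≤ (P (i + 1)).card := by
    intro i hik
    choose! s hs1 hs2 hs3 using hkey i hik
    have hdisj : ∀ w ∈ P i, ∀ w' ∈ P i, w ≠ w' → Disjoint (s w) (s w') := by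
      intro w hw w' hw' hne
      rw [Finset.disjoint_left]
      intro x hxw hxw'
      obtain ⟨pp, h1, h2, h3⟩ := hs3 w hw x hxw
      obtain ⟨pp', h1', h2', h3'⟩ := hs3 w' hw' x hxw'
      have heq := huniq pp pp' h1 h1' (by omega) (by omega)
      exact hne (by rw [← h3, ← h3', heq])
    calc 2 * (P i).card = ∑ w ∈ P i, 2 := by
          rw [Finset.sum_const, smul_eq_mul, mul_comm]
      _ = ∑ w ∈ P i, (s w).card := Finset.sum_congr rfl (fun w hw => (hs1 w hw).symm)
      _ = ((P i).biUnion s).card := (Finset.card_biUnion hdisj).symm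
      _ ≤ (P (i + 1)).card := Finset.card_le_card (Finset.biUnion_subset.mpr hs2)
  -- first level has at least 3 vertices
  have hP1 : 3 ≤ (P 1).card := by
    have hsub : G.neighborFinset v₀ ⊆ P 1 := by
      intro x hx
      rw [SimpleGraph.mem_neighborFinset] at hx
      rw [hmem]
      refine ⟨Walk.cons hx Walk.nil, ?_, by simp⟩
      rw [Walk.cons_isPath_iff]
      exact ⟨Walk.IsPath.nil, by simp [hx.ne]⟩
    calc 3 ≤ G.degree v₀ := hdeg v₀
      _ = (G.neighborFinset v₀).card := (SimpleGraph.card_neighborFinset_eq_degree _ _).symm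
      _ ≤ (P 1).card := Finset.card_le_card hsub
  -- growth of level sizes
  have hgrow : ∀ m, m + 1 ≤ k → 3 * 2 ^ m ≤ (P (m + 1)).card := by
    intro m
    induction m with
    | zero => intro _; simpa using hP1
    | succ j ihj =>
      intro hjk
      have h1 := ihj (by omega)
      have h2 := hdouble (j + 1) (by omega)
      calc 3 * 2 ^ (j + 1) = 2 * (3 * 2 ^ j) := by ring
        _ ≤ 2 * (P (j + 1)).card := by omega
        _ ≤ (P (j + 2)).card := h2
  have hdisjk : Disjoint (P (k - 1)) (P k) := by
    rw [Finset.disjoint_left]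
    intro w hw1 hw2
    rw [hmem] at hw1 hw2
    obtain ⟨p, hp, hpl⟩ := hw1
    obtain ⟨q, hq, hql⟩ := hw2
    have heq := huniq p q hp hq (by omega) (by omega)
    subst heq
    omega
  have hcards : (P (k - 1)).card + (P k).card ≤ n := by
    rw [← Finset.card_union_of_disjoint hdisjk]
    calc ((P (k - 1)) ∪ (P k)).card ≤ (Finset.univ : Finset V).card :=
          Finset.card_le_card (Finset.subset_univ _)
      _ = n := Finset.card_univ
  have g1 : 3 * 2 ^ (k - 2) ≤ (P (k - 1)).card := by
    have h := hgrow (k - 2) (by omega)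
    have hkk : k - 2 + 1 = k - 1 := by omega
    rwa [hkk] at h
  have g2 : 3 * 2 ^ (k - 1) ≤ (P k).card := by
    have h := hgrow (k - 1) (by omega)
    have hkk : k - 1 + 1 = k := by omega
    rwa [hkk] at h
  have e1 : 2 ^ (k - 1) = 2 ^ (k - 2) * 2 := by
    have hkk : k - 1 = (k - 2) + 1 := by omega
    rw [hkk, pow_succ]
  have e2 : 2 ^ (k + 1) = 2 ^ (k - 2) * 8 := by
    have hkk : k + 1 = (k - 2) + 3 := by omega
    rw [hkk, pow_add]
    norm_num
  have epos : 1 ≤ 2 ^ (k - 2) := Nat.one_le_two_pow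
  omega
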